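/- arXiv:2402.04890 — 2 statements merged into one kernel-verified Lean document; each statement's English description precedes it below -/
import Mathlib

section
/- Let u ∈ VT_a(2k;k) and let v be any binary vector of length k obtained from u by deleting one bit and then inserting one bit. Then either v = u or v ∉ VT_a(2k;k), but not both. -/
/-- VT syndrome (as a natural number sum) of a binary list. -/
def vtSyn (l : List Bool) : ℕ :=
  ∑ i : Fin l.length, ((i : ℕ) + 1) * (if l.get i then 1 else 0)

lemma sum_ite_get (l : List Bool) :
    (∑ i : Fin l.length, (if l.get i then 1 else 0)) = l.count true := by
  induction l with
  | nil => simp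
  | cons a t ih =>
    have h : (∑ i : Fin (a :: t).length, (if (a :: t).get i then 1 else 0))
        = ∑ i : Fin (t.length + 1), (if (a :: t).get i then (1:ℕ) else 0) := rfl
    rw [h, Fin.sum_univ_succ]
    simp only [List.get_cons_succ', List.get_cons_zero, List.count_cons]
    rw [ih]
    cases a <;> simp [Nat.add_comm]

lemma vtSyn_cons (a : Bool) (l : List Bool) :
    vtSyn (a :: l) = (if a then 1 else 0) + vtSyn l + l.count true := by
  have h : vtSyn (a :: l)
      = ∑ i : Fin (l.length + 1), ((i : ℕ) + 1) * (if (a :: l).get i then (1:ℕ) else 0) := rfl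
  rw [h, Fin.sum_univ_succ]
  have h2 : ∀ i : Fin l.length, ((i.succ : ℕ) + 1) * (if (a :: l).get i.succ then (1:ℕ) else 0)
      = ((i : ℕ) + 1) * (if l.get i then 1 else 0) + (if l.get i then 1 else 0) := by
    intro i
    simp only [List.get_cons_succ', Fin.val_succ]
    ring
  rw [Finset.sum_congr rfl fun i _ => h2 i, Finset.sum_add_distrib, sum_ite_get]
  simp only [Fin.val_zero, List.get_cons_zero, vtSyn]
  cases a <;> simp <;> omega

lemma count_insertIdx (b : Bool) : ∀ (n : ℕ) (w : List Bool), n ≤ w.length →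
    ((w.insertIdx n b).count true) = w.count true + (if b then 1 else 0)
  | 0, w, _ => by cases b <;> simp [List.count_cons]
  | n + 1, [], h => by simp at h
  | n + 1, a :: w, h => by
    simp only [List.insertIdx_succ_cons, List.count_cons,
      count_insertIdx b n w (Nat.le_of_succ_le_succ h)]
    ring

lemma vtSyn_insertIdx (b : Bool) : ∀ (n : ℕ) (w : List Bool), n ≤ w.length →
    vtSyn (w.insertIdx n b) = vtSyn w + (n + 1) * (if b then 1 else 0) + (w.drop n).count true
  | 0, w, _ => by rw [List.insertIdx_zero, vtSyn_cons]; simp; ring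
  | n + 1, [], h => by simp at h
  | n + 1, a :: w, h => by
    rw [List.insertIdx_succ_cons, vtSyn_cons, vtSyn_cons,
      vtSyn_insertIdx b n w (Nat.le_of_succ_le_succ h),
      count_insertIdx b n w (Nat.le_of_succ_le_succ h), List.drop_succ_cons]
    ring

lemma insertIdx_eq {α : Type*} (b : α) : ∀ (n : ℕ) (w : List α), n ≤ w.length →
    w.insertIdx n b = w.take n ++ b :: w.drop n
  | 0, w, _ => by simp
  | n + 1, [], h => by simp at h
  | n + 1, a :: w, h => by
    rw [List.insertIdx_succ_cons, insertIdx_eq b n w (Nat.le_of_succ_le_succ h)]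
    simp

lemma cons_replicate_append {α : Type*} (b : α) (m : ℕ) (X : List α) :
    b :: (List.replicate m b ++ X) = List.replicate m b ++ (b :: X) := by
  induction m with
  | zero => simp
  | succ n ih => simp only [List.replicate_succ, List.cons_append, ih]

lemma insert_shift (b : Bool) (w : List Bool) (i j : ℕ) (hij : i ≤ j) (hj : j ≤ w.length)
    (hseg : (w.drop i).take (j - i) = List.replicate (j - i) b) :
    w.insertIdx i b = w.insertIdx j b := by
  rw [insertIdx_eq b i w (le_trans hij hj), insertIdx_eq b j w hj]
  have h1 : w.take j = w.take i ++ (w.drop i).take (j - i) := by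
    conv_lhs => rw [show j = i + (j - i) by omega]
    rw [List.take_add]
  have h2 : w.drop i = (w.drop i).take (j - i) ++ w.drop j := by
    conv_lhs => rw [← List.drop_take_append_drop w i (j - i), show i + (j-i) = j by omega]
  rw [hseg] at h1 h2
  rw [h1, h2, List.append_assoc, cons_replicate_append]

lemma aux_insert (w : List Bool) (i j : ℕ) (c b : Bool) (hij : i ≤ j) (hj : j ≤ w.length)
    (heq : (i + 1) * (if c then 1 else 0) + (w.drop i).count true
         = (j + 1) * (if b then 1 else 0) + (w.drop j).count true) :
    w.insertIdx i c = w.insertIdx j b := by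
  have hsplit : (w.drop i).count true
      = ((w.drop i).take (j - i)).count true + (w.drop j).count true := by
    conv_lhs => rw [← List.drop_take_append_drop w i (j - i), show i + (j-i) = j by omega]
    rw [List.count_append]
  have hlen : ((w.drop i).take (j - i)).length = j - i := by
    rw [List.length_take, List.length_drop]; omega
  have hcle : ((w.drop i).take (j - i)).count true ≤ j - i :=
    le_trans (List.count_le_length) (le_of_eq hlen)
  rw [hsplit] at heq
  cases b with
  | false =>
    cases c with
    | true => exfalso; norm_num at heq; omega
    | false =>
      norm_num at heq
      have hcnt : ((w.drop i).take (j - i)).count true = 0 := by omega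
      refine insert_shift false w i j hij hj (List.eq_replicate_iff.mpr ⟨hlen, fun x hx => ?_⟩)
      cases x
      · rfl
      · exact absurd hx (List.count_eq_zero.mp hcnt)
  | true =>
    cases c with
    | false => exfalso; norm_num at heq; omega
    | true =>
      norm_num at heq
      have hcnt : ((w.drop i).take (j - i)).count true = j - i := by omega
      exact insert_shift true w i j hij hj (List.eq_replicate_iff.mpr
        ⟨hlen, fun x hx => (List.count_eq_length.mp (hcnt.trans hlen.symm) x hx).symm⟩)

theorem stmt3 (k : ℕ) (hk : 0 < k) (a : ZMod (2 * k)) (u v : List Bool)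
    (hu : u.length = k) (hua : ((vtSyn u : ℕ) : ZMod (2 * k)) = a)
    (j₁ j₂ : ℕ) (b : Bool) (hj₁ : j₁ < k) (hj₂ : j₂ ≤ k - 1)
    (hv : v = (u.eraseIdx j₁).insertIdx j₂ b) (hvl : v.length = k) :
    Xor' (v = u) (¬ ((vtSyn v : ℕ) : ZMod (2 * k)) = a) := by
  subst hv
  have hj₁' : j₁ < u.length := by omega
  set w := u.eraseIdx j₁ with hw
  have hwl : w.length = k - 1 := by
    rw [hw]
    simp [List.length_eraseIdx, hj₁', hu]
    omega
  have hj1w : j₁ ≤ w.length := by omega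
  have hj2w : j₂ ≤ w.length := by omega
  set c := u.get ⟨j₁, hj₁'⟩ with hc
  have hrec : u = w.insertIdx j₁ c := by
    rw [insertIdx_eq c j₁ w hj1w]
    have htw : w.take j₁ = u.take j₁ := by
      rw [hw, List.eraseIdx_eq_take_drop_succ]
      exact List.take_left' (by rw [List.length_take]; omega)
    have hdw : w.drop j₁ = u.drop (j₁ + 1) := by
      rw [hw, List.eraseIdx_eq_take_drop_succ]
      exact List.drop_left' (by rw [List.length_take]; omega)
    rw [htw, hdw]
    conv_lhs => rw [← List.take_append_drop j₁ u, List.drop_eq_getElem_cons hj₁']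
    rfl
  have hsynu : vtSyn u = vtSyn w + (j₁ + 1) * (if c then 1 else 0) + (w.drop j₁).count true := by
    conv_lhs => rw [hrec]
    exact vtSyn_insertIdx c j₁ w hj1w
  have hsynv : vtSyn (w.insertIdx j₂ b)
      = vtSyn w + (j₂ + 1) * (if b then 1 else 0) + (w.drop j₂).count true :=
    vtSyn_insertIdx b j₂ w hj2w
  have hb1 : (j₁ + 1) * (if c then 1 else 0) + (w.drop j₁).count true ≤ k := by
    have h := List.count_le_length (a := true) (l := w.drop j₁)
    rw [List.length_drop] at h
    cases c <;> simp <;> omega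
  have hb2 : (j₂ + 1) * (if b then 1 else 0) + (w.drop j₂).count true ≤ k := by
    have h := List.count_le_length (a := true) (l := w.drop j₂)
    rw [List.length_drop] at h
    cases b <;> simp <;> omega
  have key : (((vtSyn (w.insertIdx j₂ b) : ℕ) : ZMod (2 * k)) = a) ↔ w.insertIdx j₂ b = u := by
    constructor
    · intro h
      rw [← hua] at h
      have hmod : vtSyn (w.insertIdx j₂ b) ≡ vtSyn u [MOD 2 * k] :=
        (ZMod.natCast_eq_natCast_iff _ _ _).mp h
      rw [hsynu, hsynv] at hmod
      have hmod' : vtSyn w + ((j₂ + 1) * (if b then 1 else 0) + (w.drop j₂).count true)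
          ≡ vtSyn w + ((j₁ + 1) * (if c then 1 else 0) + (w.drop j₁).count true) [MOD 2 * k] := by
        simpa [Nat.add_assoc] using hmod
      have hx := Nat.ModEq.add_left_cancel' (vtSyn w) hmod'
      have heq2 : (j₂ + 1) * (if b then 1 else 0) + (w.drop j₂).count true
          = (j₁ + 1) * (if c then 1 else 0) + (w.drop j₁).count true := by
        have h1 := hx
        unfold Nat.ModEq at h1
        rw [Nat.mod_eq_of_lt (by omega), Nat.mod_eq_of_lt (by omega)] at h1
        exact h1
      rw [hrec]
      rcases le_total j₁ j₂ with hle | hle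
      · exact (aux_insert w j₁ j₂ c b hle hj2w heq2.symm).symm
      · exact aux_insert w j₂ j₁ b c hle hj1w heq2
    · intro h; rw [h]; exact hua
  by_cases hvu : w.insertIdx j₂ b = u
  · exact Or.inl ⟨hvu, not_not_intro (key.mpr hvu)⟩
  · exact Or.inr ⟨fun hc' => hvu (key.mp hc'), hvu⟩
end

section
/- Let v ∈ VT_a(2k;k) with 0 < wt_H(v) < k and k ≥ 2. Then the left-shift u = v₂…v_k1 and the right-shift u' = 0v₁…v_{k−1} cannot both lie in VT_a(2k;k). In fact, at most one of the congruences (k − wt_H(v)) ≡ 0 (mod 2k) and (wt_H(v) − (k+1)v_k) ≡ 0 (mod 2k) can hold. -/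
/-- VT syndrome (as an integer sum) of a binary list. -/
def vtSynZ (l : List Bool) : ℤ :=
  ∑ i : Fin l.length, (((i : ℕ) + 1 : ℕ) : ℤ) * (if l.get i then 1 else 0)

lemma countSum (l : List Bool) :
    (∑ i : Fin l.length, (if l.get i then (1:ℤ) else 0)) = l.count true := by
  induction l with
  | nil => simp
  | cons x t ih =>
      simp only [List.get_eq_getElem] at ih ⊢
      simp only [List.length_cons, Fin.sum_univ_succ, Fin.val_succ, Fin.val_zero,
        List.getElem_cons_succ, List.getElem_cons_zero, List.count_cons, ih]
      cases x <;> simp <;> ring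

lemma vtSynZ_cons (x : Bool) (l : List Bool) :
    vtSynZ (x :: l) = (if x then 1 else 0) + vtSynZ l + l.count true := by
  rw [vtSynZ, vtSynZ, ← countSum, add_assoc, ← Finset.sum_add_distrib]
  simp only [List.get_eq_getElem, List.length_cons, Fin.sum_univ_succ, Fin.val_succ,
    Fin.val_zero, List.getElem_cons_succ, List.getElem_cons_zero]
  congr 1
  · cases x <;> simp
  · apply Finset.sum_congr rfl
    intro i _
    push_cast
    ring

lemma vtSynZ_append (l : List Bool) (x : Bool) :
    vtSynZ (l ++ [x]) = vtSynZ l + ((l.length : ℤ)+1) * (if x then 1 else 0) := by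
  induction l with
  | nil => simp [vtSynZ]
  | cons y t ih =>
      rw [List.cons_append, vtSynZ_cons, vtSynZ_cons, ih]
      simp [List.count_append, List.count_cons]
      cases x <;> cases y <;> simp <;> ring

theorem stmt17 (k : ℕ) (hk : 2 ≤ k) (v : List Bool) (hlen : v.length = k) (a : ℤ)
    (hw : 0 < v.count true) (hw' : v.count true < k)
    (hv : vtSynZ v ≡ a [ZMOD (2 * k : ℕ)])
    (u u' : List Bool) (hu : u = v.tail ++ [true]) (hu' : u' = false :: v.dropLast) :
    ¬ (vtSynZ u ≡ a [ZMOD (2 * k : ℕ)] ∧ vtSynZ u' ≡ a [ZMOD (2 * k : ℕ)]) ∧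
    ¬ (((k : ℤ) - v.count true ≡ 0 [ZMOD (2 * k : ℕ)]) ∧
       ((v.count true : ℤ) - ((k : ℤ) + 1) * (if v.getLast! then 1 else 0) ≡ 0
          [ZMOD (2 * k : ℕ)])) := by
  subst hu hu'
  obtain ⟨b, t, rfl⟩ : ∃ b t, v = b :: t := by
    cases v with
    | nil => simp at hlen; omega
    | cons b t => exact ⟨b, t, rfl⟩
  have hlt : t.length + 1 = k := by simpa using hlen
  have hcount : ((b :: t).count true : ℤ) = (if b then 1 else 0) + t.count true := by
    cases b <;> simp [List.count_cons, add_comm]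
  have key : vtSynZ ((b :: t).tail ++ [true])
      = vtSynZ (b :: t) + ((k : ℤ) - (b :: t).count true) := by
    rw [List.tail_cons, vtSynZ_append, vtSynZ_cons, hcount]
    have : ((t.length : ℤ) + 1) = (k : ℤ) := by exact_mod_cast hlt
    rw [this]
    simp
    ring
  have hnd : ¬ (((2 * k : ℕ) : ℤ) ∣ ((k : ℤ) - (b :: t).count true)) := by
    intro h
    have h1 : (0 : ℤ) < (k : ℤ) - (b :: t).count true := by
      have := hw'
      push_cast
      omega
    have h2 := Int.le_of_dvd h1 h
    push_cast at h2
    omega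
  constructor
  · rintro ⟨h1, -⟩
    have h2 : vtSynZ ((b :: t).tail ++ [true]) ≡ vtSynZ (b :: t) [ZMOD (2 * k : ℕ)] :=
      h1.trans hv.symm
    have hd := h2.dvd
    rw [key] at hd
    apply hnd
    have : vtSynZ (b :: t) - (vtSynZ (b :: t) + ((k : ℤ) - (b :: t).count true))
        = -((k : ℤ) - (b :: t).count true) := by ring
    rw [this] at hd
    exact (dvd_neg.mp hd)
  · rintro ⟨h1, -⟩
    exact hnd ((Int.modEq_zero_iff_dvd).mp h1)
end
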